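/- Let H be a bimonoid in a braided monoidal category C whose fusion morphism v = (μ ⊗ 1) ∘ (1 ⊗ δ) : H ⊗ H ⟶ H ⊗ H is invertible with inverse v̄. Then the following four identities hold (suppressing associators and unitors): (i) v̄ ∘ (μ ⊗ 1) = (μ ⊗ 1) ∘ (1 ⊗ v̄) : H ⊗ H ⊗ H ⟶ H ⊗ H; (ii) v̄ ∘ δ = η ⊗ 1 : H ⟶ H ⊗ H; (iii) (v̄ ⊗ 1) ∘ (1 ⊗ δ) = (1 ⊗ δ) ∘ v̄ : H ⊗ H ⟶ H ⊗ H ⊗ H; (iv) μ ∘ v̄ = 1 ⊗ ε : H ⊗ H ⟶ H. -/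

import Mathlib

open CategoryTheory MonoidalCategory Category

universe v u

variable {C : Type u} [Category.{v} C] [MonoidalCategory C] [BraidedCategory C]

/-- The braiding of the first two factors of a right-nested triple tensor product. -/
def swap3 (X Y Z : C) : X ⊗ Y ⊗ Z ⟶ Y ⊗ X ⊗ Z :=
  (α_ X Y Z).inv ≫ ((β_ X Y).hom ▷ Z) ≫ (α_ Y X Z).hom

/-- A bimonoid in a braided monoidal category `C`: a monoid and a comonoid structure
on the same object such that the comultiplication and the counit are monoid
morphisms (using the braiding). -/
structure Bimon' (C : Type u) [Category.{v} C] [MonoidalCategory C] [BraidedCategory C] where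
  H : C
  mul : H ⊗ H ⟶ H
  one : 𝟙_ C ⟶ H
  mul_assoc : (mul ▷ H) ≫ mul = (α_ H H H).hom ≫ (H ◁ mul) ≫ mul
  one_mul : (one ▷ H) ≫ mul = (λ_ H).hom
  mul_one : (H ◁ one) ≫ mul = (ρ_ H).hom
  del : H ⟶ H ⊗ H
  eps : H ⟶ 𝟙_ C
  coassoc : del ≫ (del ▷ H) ≫ (α_ H H H).hom = del ≫ (H ◁ del)
  counit_left : del ≫ (eps ▷ H) ≫ (λ_ H).hom = 𝟙 H
  counit_right : del ≫ (H ◁ eps) ≫ (ρ_ H).hom = 𝟙 H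
  compat_del_mul : mul ≫ del =
    (del ⊗ₘ del) ≫ (α_ H H (H ⊗ H)).hom ≫ (H ◁ swap3 H H H) ≫
      (α_ H H (H ⊗ H)).inv ≫ (mul ⊗ₘ mul)
  compat_del_one : one ≫ del = (λ_ (𝟙_ C)).inv ≫ (one ⊗ₘ one)
  compat_eps_mul : mul ≫ eps = (eps ⊗ₘ eps) ≫ (λ_ (𝟙_ C)).hom
  compat_eps_one : one ≫ eps = 𝟙 (𝟙_ C)

/-- The fusion morphism `v = (μ ⊗ 1) ∘ (1 ⊗ δ) : H ⊗ H ⟶ H ⊗ H` of a bimonoid. -/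
def fusion (b : Bimon' C) : b.H ⊗ b.H ⟶ b.H ⊗ b.H :=
  (b.H ◁ b.del) ≫ (α_ b.H b.H b.H).inv ≫ (b.mul ▷ b.H)


section Aux

private lemma fusionL1 (b : Bimon' C) :
    (b.H ◁ fusion b) ≫ (α_ b.H b.H b.H).inv ≫ (b.mul ▷ b.H)
      = (α_ b.H b.H b.H).inv ≫ (b.mul ▷ b.H) ≫ fusion b := by
  unfold fusion
  slice_rhs 2 3 => rw [← whisker_exchange]
  slice_rhs 1 2 => rw [← associator_inv_naturality_right]
  slice_rhs 3 4 => rw [associator_inv_naturality_left]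
  slice_rhs 4 5 => rw [← comp_whiskerRight, b.mul_assoc]
  simp only [MonoidalCategory.whiskerLeft_comp, comp_whiskerRight, assoc]
  slice_lhs 3 4 => rw [associator_inv_naturality_middle]
  simp only [assoc]
  monoidal

private lemma fusionL2 (b : Bimon' C) :
    (λ_ b.H).inv ≫ (b.one ▷ b.H) ≫ fusion b = b.del := by
  unfold fusion
  slice_lhs 2 3 => rw [← whisker_exchange]
  slice_lhs 1 2 => rw [← leftUnitor_inv_naturality]
  slice_lhs 3 4 => rw [associator_inv_naturality_left]
  slice_lhs 4 5 => rw [← comp_whiskerRight, b.one_mul]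
  simp

private lemma fusionL3 (b : Bimon' C) :
    (b.H ◁ b.del) ≫ (α_ b.H b.H b.H).inv ≫ (fusion b ▷ b.H)
      = fusion b ≫ (b.H ◁ b.del) ≫ (α_ b.H b.H b.H).inv := by
  unfold fusion
  slice_rhs 3 4 => rw [← whisker_exchange]
  slice_rhs 2 3 => rw [← associator_inv_naturality_right]
  slice_rhs 4 5 => rw [associator_inv_naturality_left]
  slice_rhs 1 2 => rw [← MonoidalCategory.whiskerLeft_comp, ← b.coassoc]
  simp only [MonoidalCategory.whiskerLeft_comp, comp_whiskerRight, assoc]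
  slice_lhs 2 3 => rw [← associator_inv_naturality_middle]
  simp only [assoc]
  monoidal

private lemma fusionL4 (b : Bimon' C) :
    fusion b ≫ (b.H ◁ b.eps) ≫ (ρ_ b.H).hom = b.mul := by
  unfold fusion
  slice_lhs 3 4 => rw [← whisker_exchange]
  slice_lhs 2 3 => rw [← associator_inv_naturality_right]
  slice_lhs 4 5 => rw [rightUnitor_naturality]
  rw [rightUnitor_tensor_hom]
  simp only [assoc, Iso.inv_hom_id_assoc]
  rw [← MonoidalCategory.whiskerLeft_comp_assoc, ← MonoidalCategory.whiskerLeft_comp_assoc,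
    assoc, b.counit_right, MonoidalCategory.whiskerLeft_id, id_comp]

end Aux

/-- Let `H` be a bimonoid in a braided monoidal category `C` whose
fusion morphism `v = (μ ⊗ 1) ∘ (1 ⊗ δ)` is invertible with inverse `v̄`.  Then
(suppressing associators and unitors):
(i)   `v̄ ∘ (μ ⊗ 1) = (μ ⊗ 1) ∘ (1 ⊗ v̄)`;
(ii)  `v̄ ∘ δ = η ⊗ 1`;
(iii) `(v̄ ⊗ 1) ∘ (1 ⊗ δ) = (1 ⊗ δ) ∘ v̄`;
(iv)  `μ ∘ v̄ = 1 ⊗ ε`. -/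
theorem stmt18 (b : Bimon' C) (vbar : b.H ⊗ b.H ⟶ b.H ⊗ b.H)
    (h1 : fusion b ≫ vbar = 𝟙 (b.H ⊗ b.H))
    (h2 : vbar ≫ fusion b = 𝟙 (b.H ⊗ b.H)) :
    ((α_ b.H b.H b.H).inv ≫ (b.mul ▷ b.H) ≫ vbar
        = (b.H ◁ vbar) ≫ (α_ b.H b.H b.H).inv ≫ (b.mul ▷ b.H)) ∧
    (b.del ≫ vbar = (λ_ b.H).inv ≫ (b.one ▷ b.H)) ∧
    ((b.H ◁ b.del) ≫ (α_ b.H b.H b.H).inv ≫ (vbar ▷ b.H)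
        = vbar ≫ (b.H ◁ b.del) ≫ (α_ b.H b.H b.H).inv) ∧
    (vbar ≫ b.mul = (b.H ◁ b.eps) ≫ (ρ_ b.H).hom) := by
  have hw1 : (b.H ◁ vbar) ≫ (b.H ◁ fusion b) = 𝟙 _ := by
    rw [← MonoidalCategory.whiskerLeft_comp, h2, MonoidalCategory.whiskerLeft_id]
  have hw2 : (fusion b ▷ b.H) ≫ (vbar ▷ b.H) = 𝟙 _ := by
    rw [← comp_whiskerRight, h1, id_whiskerRight]
  refine ⟨?_, ?_, ?_, ?_⟩
  · calc (α_ b.H b.H b.H).inv ≫ (b.mul ▷ b.H) ≫ vbar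
        = (b.H ◁ vbar) ≫ (b.H ◁ fusion b) ≫ (α_ b.H b.H b.H).inv ≫ (b.mul ▷ b.H) ≫ vbar := by
          rw [reassoc_of% hw1]
      _ = (b.H ◁ vbar) ≫ (α_ b.H b.H b.H).inv ≫ (b.mul ▷ b.H) ≫ fusion b ≫ vbar := by
          rw [reassoc_of% (fusionL1 b)]
      _ = (b.H ◁ vbar) ≫ (α_ b.H b.H b.H).inv ≫ (b.mul ▷ b.H) := by rw [h1, comp_id]
  · rw [← fusionL2 b]
    simp only [assoc, h1, comp_id]
  · calc (b.H ◁ b.del) ≫ (α_ b.H b.H b.H).inv ≫ (vbar ▷ b.H)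
        = vbar ≫ fusion b ≫ (b.H ◁ b.del) ≫ (α_ b.H b.H b.H).inv ≫ (vbar ▷ b.H) := by
          rw [reassoc_of% h2]
      _ = vbar ≫ (b.H ◁ b.del) ≫ (α_ b.H b.H b.H).inv ≫ (fusion b ▷ b.H) ≫ (vbar ▷ b.H) := by
          rw [← reassoc_of% (fusionL3 b)]
      _ = vbar ≫ (b.H ◁ b.del) ≫ (α_ b.H b.H b.H).inv := by rw [hw2, comp_id]
  · rw [← fusionL4 b, ← assoc, h2, id_comp]
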